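/- ((δ,2)-relaxed convex validity implies (1 + 2δ/diam(H))-relaxed MEB validity.) Let H be a set of points in EuclideanSpace ℝ (Fin d) with H ⊆ closedBall(C*, r*), where r* > 0 and the diameter diam(H) = sup_{u,w ∈ H} ‖u − w‖₂ is strictly positive. Let δ ≥ 0 and suppose y ∈ EuclideanSpace ℝ (Fin d) satisfies ‖y − x‖₂ ≤ δ for some x in the convex hull of H. Then ‖y − C*‖₂ ≤ (1 + 2δ/diam(H)) · r*. -/
import Mathlib

/-- `(δ,2)`-relaxed convex validity implies `(1 + 2δ/diam(H))`-relaxed MEB validity: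
if the honest points `H` lie in `closedBall C* r*` with `r* > 0` and `diam H > 0`, and
`y` is within distance `δ` of some point of the convex hull of `H`, then
`‖y - C*‖ ≤ (1 + 2δ/diam(H))·r*`. -/
theorem relaxed_convex_implies_relaxed_meb (d : ℕ)
    (H : Set (EuclideanSpace ℝ (Fin d)))
    (Cstar : EuclideanSpace ℝ (Fin d)) (rstar : ℝ) (hr : 0 < rstar)
    (hH : H ⊆ Metric.closedBall Cstar rstar)
    (hdiam : 0 < Metric.diam H)
    (δ : ℝ) (hδ : 0 ≤ δ)
    (y : EuclideanSpace ℝ (Fin d))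
    (hy : ∃ x ∈ convexHull ℝ H, ‖y - x‖ ≤ δ) :
    ‖y - Cstar‖ ≤ (1 + 2 * δ / Metric.diam H) * rstar := by
  obtain ⟨x, hx, hyx⟩ := hy
  have hxball : x ∈ Metric.closedBall Cstar rstar := by
    have : convexHull ℝ H ⊆ Metric.closedBall Cstar rstar :=
      convexHull_min hH (convex_closedBall _ _)
    exact this hx
  have hxC : ‖x - Cstar‖ ≤ rstar := by
    simpa [dist_eq_norm] using hxball
  have hd : Metric.diam H ≤ 2 * rstar := by
    calc Metric.diam H ≤ Metric.diam (Metric.closedBall Cstar rstar) :=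
          Metric.diam_mono hH Metric.isBounded_closedBall
      _ ≤ 2 * rstar := Metric.diam_closedBall hr.le
  have key : δ ≤ 2 * δ / Metric.diam H * rstar := by
    rw [div_mul_eq_mul_div, le_div_iff₀ hdiam]
    nlinarith
  calc ‖y - Cstar‖ = ‖(y - x) + (x - Cstar)‖ := by rw [sub_add_sub_cancel]
      _ ≤ ‖y - x‖ + ‖x - Cstar‖ := norm_add_le _ _
      _ ≤ δ + rstar := add_le_add hyx hxC
      _ ≤ (1 + 2 * δ / Metric.diam H) * rstar := by nlinarith [key]
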